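/- Let n ≥ 1 be an integer. For j ≥ 1 and t ≥ 0 define φ_j(α,t) = ((1−α)t + α)^{j−1} / ((1−α)t + 1)^{j+1} as a function of α in a neighborhood of 0, and set P_j(t) = (1/(n−1)!) · (d^{n−1}/dα^{n−1}) φ_j(α,t) evaluated at α = 0. Then P_j(0) = 1 if j = n and P_j(0) = 0 if j ≠ n, and for every t ≥ 0 and every j ≥ 1, d P_j/dt (t) = (j+1)·P_{j+1}(t) + (j−1)·P_{j−1}(t) − 2j·P_j(t), where for j = 1 the term (j−1)·P_{j−1}(t) is zero. -/

import Mathlib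

open Set Filter Topology

/-! ### Auxiliary lemmas -/

private lemma zhang_deriv_fst {f : ℝ × ℝ → ℝ} {α s : ℝ} (hf : DifferentiableAt ℝ f (α, s)) :
    HasDerivAt (fun β => f (β, s)) (fderiv ℝ f (α, s) (1, 0)) α := by
  have h1 : HasDerivAt (fun β : ℝ => (β, s)) ((1 : ℝ), (0 : ℝ)) α :=
    (hasDerivAt_id α).prodMk (hasDerivAt_const α s)
  exact hf.hasFDerivAt.comp_hasDerivAt α h1

private lemma zhang_deriv_snd {f : ℝ × ℝ → ℝ} {α s : ℝ} (hf : DifferentiableAt ℝ f (α, s)) :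
    HasDerivAt (fun u => f (α, u)) (fderiv ℝ f (α, s) (0, 1)) s := by
  have h1 : HasDerivAt (fun u : ℝ => (α, u)) ((0 : ℝ), (1 : ℝ)) s :=
    (hasDerivAt_const s α).prodMk (hasDerivAt_id s)
  exact hf.hasFDerivAt.comp_hasDerivAt s h1

private lemma zhang_smooth_dir {U : Set (ℝ × ℝ)} (hU : IsOpen U) {f : ℝ × ℝ → ℝ}
    (hf : ContDiffOn ℝ ⊤ f U) (v : ℝ × ℝ) :
    ContDiffOn ℝ ⊤ (fun q => fderiv ℝ f q v) U :=
  (hf.fderiv_of_isOpen hU le_top).clm_apply contDiffOn_const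

private lemma zhang_mixed_partials {U : Set (ℝ × ℝ)} (hU : IsOpen U) {f : ℝ × ℝ → ℝ}
    (hf : ContDiffOn ℝ ⊤ f U) {p : ℝ × ℝ} (hp : p ∈ U) :
    fderiv ℝ (fun q => fderiv ℝ f q (0, 1)) p (1, 0)
      = fderiv ℝ (fun q => fderiv ℝ f q (1, 0)) p (0, 1) := by
  have hfd : ContDiffOn ℝ ⊤ (fderiv ℝ f) U := hf.fderiv_of_isOpen hU le_top
  have hdiff : DifferentiableAt ℝ (fderiv ℝ f) p :=
    ((hfd.contDiffAt (hU.mem_nhds hp)).differentiableAt (by simp))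
  have hsymm : IsSymmSndFDerivAt ℝ f p :=
    (hf.contDiffAt (hU.mem_nhds hp)).isSymmSndFDerivAt (by norm_num)
  have e1 : fderiv ℝ (fun q => fderiv ℝ f q (0, 1)) p
      = (fderiv ℝ (fderiv ℝ f) p).flip (0, 1) := by
    simpa using fderiv_clm_apply (c := fderiv ℝ f) (u := fun _ => ((0:ℝ), (1:ℝ))) hdiff
      (differentiableAt_const _)
  have e2 : fderiv ℝ (fun q => fderiv ℝ f q (1, 0)) p
      = (fderiv ℝ (fderiv ℝ f) p).flip (1, 0) := by
    simpa using fderiv_clm_apply (c := fderiv ℝ f) (u := fun _ => ((1:ℝ), (0:ℝ))) hdiff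
      (differentiableAt_const _)
  rw [e1, e2]; exact hsymm _ _

/-- Swap lemma: the time derivative of an iterated space derivative of a smooth
two-variable function is the iterated space derivative of the time derivative. -/
private lemma zhang_swap_param (m : ℕ) : ∀ {U : Set (ℝ × ℝ)}, IsOpen U → ∀ {f : ℝ × ℝ → ℝ},
    ContDiffOn ℝ ⊤ f U → ∀ {x t : ℝ}, (x, t) ∈ U →
    HasDerivAt (fun s => iteratedDeriv m (fun α => f (α, s)) x)
      (iteratedDeriv m (fun α => fderiv ℝ f (α, t) (0, 1)) x) t := by
  induction m with
  | zero =>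
    intro U hU f hf x t hxt
    simpa [iteratedDeriv_zero] using
      zhang_deriv_snd ((hf.contDiffAt (hU.mem_nhds hxt)).differentiableAt (by simp))
  | succ m IH =>
    intro U hU f hf x t hxt
    set g : ℝ × ℝ → ℝ := fun q => fderiv ℝ f q (1, 0) with hg_def
    have hg : ContDiffOn ℝ ⊤ g U := zhang_smooth_dir hU hf (1, 0)
    have IHg := IH hU hg hxt
    obtain ⟨V, W, hV, hW, hxV, htW, hVW⟩ : ∃ V W, IsOpen V ∧ IsOpen W ∧ x ∈ V ∧ t ∈ W ∧
        V ×ˢ W ⊆ U := by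
      rcases isOpen_prod_iff.1 hU x t hxt with ⟨V, W, hV, hW, hxV, htW, hVW⟩
      exact ⟨V, W, hV, hW, hxV, htW, hVW⟩
    have key : ∀ s ∈ W, iteratedDeriv m (fun α => g (α, s)) x
        = iteratedDeriv (m + 1) (fun α => f (α, s)) x := by
      intro s hs
      rw [iteratedDeriv_succ']
      apply Filter.EventuallyEq.iteratedDeriv_eq
      filter_upwards [hV.mem_nhds hxV] with α hα
      have hmem : (α, s) ∈ U := hVW ⟨hα, hs⟩
      exact (zhang_deriv_fst
        ((hf.contDiffAt (hU.mem_nhds hmem)).differentiableAt (by simp))).deriv.symm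
    have hev : (fun s => iteratedDeriv m (fun α => g (α, s)) x)
        =ᶠ[𝓝 t] (fun s => iteratedDeriv (m + 1) (fun α => f (α, s)) x) := by
      filter_upwards [hW.mem_nhds htW] with s hs using key s hs
    have hval : iteratedDeriv m (fun α => fderiv ℝ g (α, t) (0, 1)) x
        = iteratedDeriv (m + 1) (fun α => fderiv ℝ f (α, t) (0, 1)) x := by
      rw [iteratedDeriv_succ']
      apply Filter.EventuallyEq.iteratedDeriv_eq
      filter_upwards [hV.mem_nhds hxV] with α hα
      have hmem : (α, t) ∈ U := hVW ⟨hα, htW⟩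
      have h1 : deriv (fun β => fderiv ℝ f (β, t) (0, 1)) α
          = fderiv ℝ (fun q => fderiv ℝ f q (0, 1)) (α, t) (1, 0) :=
        (zhang_deriv_fst (((zhang_smooth_dir hU hf (0,1)).contDiffAt
          (hU.mem_nhds hmem)).differentiableAt (by simp))).deriv
      rw [h1, zhang_mixed_partials hU hf hmem]
    rw [← hval]
    exact IHg.congr_of_eventuallyEq hev.symm

/-- The two-variable family `φ_j(α,t)`. -/
private noncomputable def zhangPhi (j : ℕ) : ℝ × ℝ → ℝ :=
  fun p => ((1 - p.1) * p.2 + p.1) ^ (j - 1) / ((1 - p.1) * p.2 + 1) ^ (j + 1)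

private lemma zhangU_open : IsOpen {p : ℝ × ℝ | (1 - p.1) * p.2 + 1 ≠ 0} :=
  isOpen_ne_fun (by fun_prop) continuous_const

private lemma zhangPhi_smooth (j : ℕ) :
    ContDiffOn ℝ ⊤ (zhangPhi j) {p : ℝ × ℝ | (1 - p.1) * p.2 + 1 ≠ 0} := by
  apply ContDiffOn.div
  · exact (((contDiff_const.sub contDiff_fst).mul contDiff_snd).add contDiff_fst).pow _
      |>.contDiffOn
  · exact (((contDiff_const.sub contDiff_fst).mul contDiff_snd).add contDiff_const).pow _
      |>.contDiffOn
  · intro p hp; exact pow_ne_zero _ hp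

private lemma zhang_hasDerivAt_lin (α t c : ℝ) :
    HasDerivAt (fun s : ℝ => (1 - α) * s + c) (1 - α) t := by
  simpa using ((hasDerivAt_id t).const_mul (1 - α)).add_const c

private lemma zhang_hasDerivAt_ratio (a b : ℕ) (α t : ℝ) (hv : (1 - α) * t + 1 ≠ 0) :
    HasDerivAt (fun s => ((1 - α) * s + α) ^ a / ((1 - α) * s + 1) ^ b)
      (((a : ℝ) * ((1 - α) * t + α) ^ (a - 1) * (1 - α) * ((1 - α) * t + 1) ^ b
        - ((1 - α) * t + α) ^ a * ((b : ℝ) * ((1 - α) * t + 1) ^ (b - 1) * (1 - α)))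
        / (((1 - α) * t + 1) ^ b) ^ 2) t := by
  have hu : HasDerivAt (fun s => ((1 - α) * s + α) ^ a)
      ((a : ℝ) * ((1 - α) * t + α) ^ (a - 1) * (1 - α)) t := by
    simpa using (zhang_hasDerivAt_lin α t α).fun_pow a
  have hw : HasDerivAt (fun s => ((1 - α) * s + 1) ^ b)
      ((b : ℝ) * ((1 - α) * t + 1) ^ (b - 1) * (1 - α)) t := by
    simpa using (zhang_hasDerivAt_lin α t 1).fun_pow b
  exact hu.div hw (pow_ne_zero _ hv)

/-- Pointwise ODE for the family `φ_j` in the time variable. -/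
private lemma zhangPhi_t_deriv (j : ℕ) (hj : 1 ≤ j) {α t : ℝ} (hv : (1 - α) * t + 1 ≠ 0) :
    HasDerivAt (fun s => zhangPhi j (α, s))
      (((j : ℝ) + 1) * zhangPhi (j + 1) (α, t)
        + ((j : ℝ) - 1) * zhangPhi (j - 1) (α, t)
        - 2 * (j : ℝ) * zhangPhi j (α, t)) t := by
  simp only [zhangPhi]
  rcases Nat.lt_or_ge j 2 with h2 | h2
  · interval_cases j
    have h := zhang_hasDerivAt_ratio 0 2 α t hv
    convert h using 1
    push_cast
    field_simp
    ring
  · obtain ⟨l, rfl⟩ : ∃ l, j = l + 2 := ⟨j - 2, by omega⟩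
    have h := zhang_hasDerivAt_ratio (l + 1) (l + 3) α t hv
    convert h using 1
    simp only [show l+2-1 = l+1 from by omega, show l+1-1 = l from by omega,
      show l+1+1 = l+2 from by omega, show l+2+1 = l+3 from by omega,
      show l+3-1 = l+2 from by omega, show l+3+1 = l+4 from by omega]
    push_cast
    field_simp
    ring

private lemma zhang_iteratedDerivWithin_of_isOpen {m : ℕ} {f : ℝ → ℝ} {s : Set ℝ} {x : ℝ}
    (hs : IsOpen s) (hx : x ∈ s) :
    iteratedDerivWithin m f s x = iteratedDeriv m f x := by
  rw [iteratedDerivWithin_eq_iteratedFDerivWithin, iteratedDeriv_eq_iteratedFDeriv,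
    iteratedFDerivWithin_of_isOpen m hs hx]

private lemma zhang_iteratedDeriv_pow_aux (m : ℕ) : ∀ (k : ℕ) (x : ℝ),
    iteratedDeriv m (fun y : ℝ => y ^ k) x = (k.descFactorial m : ℝ) * x ^ (k - m) := by
  induction m with
  | zero => intro k x; simp
  | succ m IH =>
    intro k x
    rw [iteratedDeriv_succ']
    have hd : (deriv fun y : ℝ => y ^ k) = fun y : ℝ => (k : ℝ) * y ^ (k - 1) := by
      funext y; simp [deriv_pow]
    rw [hd]
    have : iteratedDeriv m (fun y : ℝ => (k : ℝ) * y ^ (k - 1)) x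
        = (k : ℝ) * iteratedDeriv m (fun y : ℝ => y ^ (k - 1)) x := by
      rw [← iteratedDerivWithin_univ, ← iteratedDerivWithin_univ]
      exact iteratedDerivWithin_const_mul (Set.mem_univ x) uniqueDiffOn_univ (k : ℝ)
        ((contDiff_id.pow _).contDiffWithinAt)
    rw [this, IH (k - 1) x]
    have he : k - 1 - m = k - (m + 1) := by omega
    rw [he]
    rcases k with _ | s
    · simp
    · rw [Nat.succ_descFactorial_succ]
      push_cast
      ring

private lemma zhang_iteratedDeriv_pow_zero (m k : ℕ) :
    iteratedDeriv m (fun y : ℝ => y ^ k) 0 = if k = m then (m.factorial : ℝ) else 0 := by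
  rw [zhang_iteratedDeriv_pow_aux]
  rcases lt_trichotomy k m with h | h | h
  · rw [Nat.descFactorial_eq_zero_iff_lt.2 h]; simp [Nat.ne_of_lt h]
  · subst h; simp [Nat.descFactorial_self]
  · rw [if_neg (by omega), zero_pow (by omega), mul_zero]

/-- `P_j(t) = (1/(n−1)!) · ∂^{n−1}/∂α^{n−1} [ ((1−α)t+α)^{j−1}/((1−α)t+1)^{j+1} ]`
evaluated at `α = 0`. -/
noncomputable def zhangWalkDeltaSol (n j : ℕ) (t : ℝ) : ℝ :=
  (1 / (Nat.factorial (n - 1) : ℝ)) *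
    iteratedDeriv (n - 1)
      (fun α : ℝ => ((1 - α) * t + α) ^ (j - 1) / ((1 - α) * t + 1) ^ (j + 1)) 0

private lemma zhangWalkDeltaSol_eq (n j : ℕ) (t : ℝ) :
    zhangWalkDeltaSol n j t
      = (1 / (Nat.factorial (n - 1) : ℝ)) *
          iteratedDeriv (n - 1) (fun α : ℝ => zhangPhi j (α, t)) 0 := rfl

/-- For `n ≥ 1`, the functions obtained by differentiating the family
`φ_j(α,t) = ((1−α)t+α)^{j−1}/((1−α)t+1)^{j+1}` `(n−1)` times in `α` at `α = 0`
(normalized by `(n−1)!`) satisfy the Kronecker-delta initial condition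
`P_j(0) = δ_{j,n}` and solve the ODE system
`dP_j/dt = (j+1)P_{j+1} + (j−1)P_{j−1} − 2j·P_j` for `j ≥ 1`, `t ≥ 0`
(the coefficient `j − 1` vanishing for `j = 1`). -/
theorem zhangWalkDeltaSol_solves_system (n : ℕ) (hn : 1 ≤ n) :
    (∀ j : ℕ, 1 ≤ j → zhangWalkDeltaSol n j 0 = if j = n then 1 else 0) ∧
    (∀ j : ℕ, 1 ≤ j → ∀ t : ℝ, 0 ≤ t →
      HasDerivWithinAt (zhangWalkDeltaSol n j)
        (((j : ℝ) + 1) * zhangWalkDeltaSol n (j + 1) t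
          + ((j : ℝ) - 1) * zhangWalkDeltaSol n (j - 1) t
          - 2 * (j : ℝ) * zhangWalkDeltaSol n j t)
        (Set.Ici 0) t) := by
  constructor
  · -- initial condition
    intro j hj
    unfold zhangWalkDeltaSol
    have hfun : (fun α : ℝ => ((1 - α) * (0:ℝ) + α) ^ (j - 1) / ((1 - α) * (0:ℝ) + 1) ^ (j + 1))
        = fun α : ℝ => α ^ (j - 1) := by
      funext α; simp
    rw [hfun, zhang_iteratedDeriv_pow_zero]
    have hiff : (j - 1 = n - 1) ↔ (j = n) := by omega
    by_cases h : j = n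
    · rw [if_pos (hiff.2 h), if_pos h]
      exact one_div_mul_cancel (Nat.cast_ne_zero.2 (Nat.factorial_pos _).ne')
    · rw [if_neg (fun hh => h (hiff.1 hh)), if_neg h, mul_zero]
  · -- the ODE
    intro j hj t ht
    set U : Set (ℝ × ℝ) := {p : ℝ × ℝ | (1 - p.1) * p.2 + 1 ≠ 0} with hU_def
    have hU : IsOpen U := zhangU_open
    have hmem : ((0 : ℝ), t) ∈ U := by
      simp only [hU_def, Set.mem_setOf_eq]
      intro h; nlinarith
    have c_ne : ((Nat.factorial (n - 1) : ℝ)) ≠ 0 :=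
      Nat.cast_ne_zero.2 (Nat.factorial_pos _).ne'
    set c : ℝ := 1 / (Nat.factorial (n - 1) : ℝ) with hc_def
    -- the swap
    have hswap := zhang_swap_param (n - 1) hU (zhangPhi_smooth j) hmem
    -- identify the derivative value
    set st : Set ℝ := {α : ℝ | (1 - α) * t + 1 ≠ 0} with hst_def
    have hst_open : IsOpen st := isOpen_ne_fun (by fun_prop) continuous_const
    have h0st : (0 : ℝ) ∈ st := by
      simp only [hst_def, Set.mem_setOf_eq]; intro h; nlinarith
    have hmem' : ∀ α ∈ st, (α, t) ∈ U := fun α hα => hα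
    -- pointwise identification of the t-derivative of phi
    have hpt : ∀ α ∈ st, fderiv ℝ (zhangPhi j) (α, t) (0, 1)
        = ((j : ℝ) + 1) * zhangPhi (j + 1) (α, t)
          + ((j : ℝ) - 1) * zhangPhi (j - 1) (α, t)
          - 2 * (j : ℝ) * zhangPhi j (α, t) := by
      intro α hα
      have hdiff : DifferentiableAt ℝ (zhangPhi j) (α, t) :=
        ((zhangPhi_smooth j).contDiffAt (hU.mem_nhds (hmem' α hα))).differentiableAt (by simp)
      exact (zhang_deriv_snd hdiff).unique (zhangPhi_t_deriv j hj hα)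
    have hval : iteratedDeriv (n - 1) (fun α => fderiv ℝ (zhangPhi j) (α, t) (0, 1)) 0
        = iteratedDeriv (n - 1)
            (fun α => ((j : ℝ) + 1) * zhangPhi (j + 1) (α, t)
              + ((j : ℝ) - 1) * zhangPhi (j - 1) (α, t)
              - 2 * (j : ℝ) * zhangPhi j (α, t)) 0 := by
      apply Filter.EventuallyEq.iteratedDeriv_eq
      filter_upwards [hst_open.mem_nhds h0st] with α hα using hpt α hα
    -- smoothness of slices
    have hslice : ∀ k : ℕ, ContDiffOn ℝ (n - 1 : ℕ) (fun α => zhangPhi k (α, t)) st := by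
      intro k
      have : ContDiffOn ℝ ⊤ (fun α => zhangPhi k (α, t)) st := by
        apply (zhangPhi_smooth k).comp
          (f := fun α : ℝ => (α, t)) (contDiff_id.prodMk contDiff_const).contDiffOn
        intro α hα; exact hmem' α hα
      exact this.of_le le_top
    -- linearity
    have hlin : iteratedDeriv (n - 1)
        (fun α => ((j : ℝ) + 1) * zhangPhi (j + 1) (α, t)
          + ((j : ℝ) - 1) * zhangPhi (j - 1) (α, t)
          - 2 * (j : ℝ) * zhangPhi j (α, t)) 0
        = ((j : ℝ) + 1) * iteratedDeriv (n - 1) (fun α => zhangPhi (j + 1) (α, t)) 0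
          + ((j : ℝ) - 1) * iteratedDeriv (n - 1) (fun α => zhangPhi (j - 1) (α, t)) 0
          - 2 * (j : ℝ) * iteratedDeriv (n - 1) (fun α => zhangPhi j (α, t)) 0 := by
      have hF1 : ContDiffOn ℝ (n - 1 : ℕ)
          (fun α => ((j : ℝ) + 1) * zhangPhi (j + 1) (α, t)
            + ((j : ℝ) - 1) * zhangPhi (j - 1) (α, t)) st :=
        (contDiffOn_const.mul (hslice (j+1))).add (contDiffOn_const.mul (hslice (j-1)))
      have hF2 : ContDiffOn ℝ (n - 1 : ℕ)
          (fun α => 2 * (j : ℝ) * zhangPhi j (α, t)) st :=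
        contDiffOn_const.mul (hslice j)
      rw [← zhang_iteratedDerivWithin_of_isOpen hst_open h0st]
      rw [show (fun α => ((j : ℝ) + 1) * zhangPhi (j + 1) (α, t)
          + ((j : ℝ) - 1) * zhangPhi (j - 1) (α, t)
          - 2 * (j : ℝ) * zhangPhi j (α, t))
        = (fun α => ((j : ℝ) + 1) * zhangPhi (j + 1) (α, t)
            + ((j : ℝ) - 1) * zhangPhi (j - 1) (α, t))
          - (fun α => 2 * (j : ℝ) * zhangPhi j (α, t)) from rfl]
      rw [iteratedDerivWithin_sub h0st hst_open.uniqueDiffOn (hF1 0 h0st) (hF2 0 h0st)]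
      rw [show (fun α => ((j : ℝ) + 1) * zhangPhi (j + 1) (α, t)
            + ((j : ℝ) - 1) * zhangPhi (j - 1) (α, t))
        = (fun α => ((j : ℝ) + 1) * zhangPhi (j + 1) (α, t))
          + (fun α => ((j : ℝ) - 1) * zhangPhi (j - 1) (α, t)) from rfl]
      rw [iteratedDerivWithin_add h0st hst_open.uniqueDiffOn
        (contDiffOn_const.mul (hslice (j+1)) 0 h0st) (contDiffOn_const.mul (hslice (j-1)) 0 h0st)]
      rw [iteratedDerivWithin_const_mul h0st hst_open.uniqueDiffOn _ (hslice (j+1) 0 h0st),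
        iteratedDerivWithin_const_mul h0st hst_open.uniqueDiffOn _ (hslice (j-1) 0 h0st),
        iteratedDerivWithin_const_mul h0st hst_open.uniqueDiffOn _ (hslice j 0 h0st)]
      rw [zhang_iteratedDerivWithin_of_isOpen hst_open h0st,
        zhang_iteratedDerivWithin_of_isOpen hst_open h0st,
        zhang_iteratedDerivWithin_of_isOpen hst_open h0st]
    -- assemble
    have hmain : HasDerivAt (zhangWalkDeltaSol n j)
        (((j : ℝ) + 1) * zhangWalkDeltaSol n (j + 1) t
          + ((j : ℝ) - 1) * zhangWalkDeltaSol n (j - 1) t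
          - 2 * (j : ℝ) * zhangWalkDeltaSol n j t) t := by
      have h2 : HasDerivAt (fun s => c * iteratedDeriv (n - 1) (fun α => zhangPhi j (α, s)) 0)
          (c * iteratedDeriv (n - 1) (fun α => fderiv ℝ (zhangPhi j) (α, t) (0, 1)) 0) t :=
        hswap.const_mul c
      have hfun : zhangWalkDeltaSol n j
          = fun s => c * iteratedDeriv (n - 1) (fun α => zhangPhi j (α, s)) 0 := rfl
      rw [hfun]
      convert h2 using 1
      rw [hval, hlin, zhangWalkDeltaSol_eq, zhangWalkDeltaSol_eq]
      simp only [hc_def]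
      ring
    exact hmain.hasDerivWithinAt
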